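/- For every real x with 0 < x < 1, the infinite product ∏_{p=1}^{∞} [ 2^{−2^{p−1} x} · Γ((2^p x + 1)/2) / Γ((2^p x + 2)/4)² ]^{2^{−p}} converges and equals (2e)^{−x/2} · x^{x/2} / Γ((x+1)/2). -/

import Mathlib

open Real Finset Filter

open Nat Topology

lemma aux_log_div : Tendsto (fun t : ℝ => Real.log t / t) atTop (𝓝 0) := by
  simpa using Real.isLittleO_log_id_atTop.tendsto_div_nhds_zero

lemma aux_fact : Tendsto (fun n : ℕ => Real.log n ! / n - Real.log n) atTop (𝓝 (-1)) := by
  have h1 : Tendsto (fun n : ℕ => Real.log (Stirling.stirlingSeq n) / n) atTop (𝓝 0) := by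
    have := ((Real.continuousAt_log (by positivity : Real.sqrt π ≠ 0)).tendsto.comp
      Stirling.tendsto_stirlingSeq_sqrt_pi)
    exact this.div_atTop tendsto_natCast_atTop_atTop
  have h2 : Tendsto (fun n : ℕ => Real.log (2 * n) / (2 * n)) atTop (𝓝 0) :=
    aux_log_div.comp (tendsto_natCast_atTop_atTop.const_mul_atTop two_pos)
  have key : ∀ᶠ n : ℕ in atTop, Real.log (Stirling.stirlingSeq n) / n + Real.log (2 * n) / (2 * n)
      + (-1) = Real.log n ! / n - Real.log n := by
    filter_upwards [eventually_ge_atTop 1] with n hn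
    have hn0 : (0:ℝ) < n := by exact_mod_cast hn
    have := Stirling.log_stirlingSeq_formula n
    have hlog : Real.log ((n:ℝ) / Real.exp 1) = Real.log n - 1 := by
      rw [Real.log_div (ne_of_gt hn0) (Real.exp_ne_zero 1), Real.log_exp]
    rw [hlog] at this
    rw [this]
    field_simp
    ring
  have := (h1.add h2).add_const (-1)
  rw [show (0:ℝ) + 0 + (-1) = -1 by ring] at this
  exact this.congr' key

lemma aux_A : Tendsto (fun m : ℕ => Real.log m ! / (m + 2) - Real.log (m + 2)) atTop (𝓝 (-1)) := by
  have hr : Tendsto (fun m : ℕ => (m:ℝ) / (m + 2)) atTop (𝓝 1) := by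
    have h2 : Tendsto (fun m : ℕ => 2 / ((m:ℝ) + 2)) atTop (𝓝 0) :=
      tendsto_const_nhds.div_atTop (tendsto_natCast_atTop_atTop.atTop_add tendsto_const_nhds)
    have := (tendsto_const_nhds (x := (1:ℝ)) (f := atTop (α := ℕ))).sub h2
    rw [sub_zero] at this
    refine this.congr' ?_
    filter_upwards [eventually_ge_atTop 1] with m hm
    have : (0:ℝ) < (m:ℝ) + 2 := by positivity
    field_simp
    ring
  have hlogm : Tendsto (fun m : ℕ => Real.log m / m) atTop (𝓝 0) :=
    aux_log_div.comp tendsto_natCast_atTop_atTop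
  have hlogr : Tendsto (fun m : ℕ => Real.log ((m:ℝ) / (m + 2))) atTop (𝓝 0) := by
    have := (Real.continuousAt_log one_ne_zero).tendsto.comp hr
    simpa [Function.comp_def] using this
  have hcomb := ((aux_fact.mul hr).add hlogr).sub ((hlogm.const_mul 2).mul hr)
  rw [show (-1:ℝ) * 1 + 0 - 2 * 0 * 1 = -1 by ring] at hcomb
  refine hcomb.congr' ?_
  filter_upwards [eventually_ge_atTop 1] with m hm
  have hm0 : (0:ℝ) < m := by exact_mod_cast hm
  have h2 : (0:ℝ) < (m:ℝ) + 2 := by positivity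
  rw [Real.log_div (ne_of_gt hm0) (ne_of_gt h2)]
  field_simp
  ring

lemma aux_gamma : Tendsto (fun t : ℝ => Real.log (Real.Gamma t) / t - Real.log t) atTop (𝓝 (-1)) := by
  have hup : Tendsto (fun t : ℝ => Real.log (⌊t⌋₊)! / (⌊t⌋₊ : ℝ) - Real.log (⌊t⌋₊ : ℝ))
      atTop (𝓝 (-1)) := aux_fact.comp tendsto_nat_floor_atTop
  have hlo : Tendsto (fun t : ℝ => Real.log (⌊t⌋₊ - 1)! / ((⌊t⌋₊ - 1 : ℕ) + 2)
      - Real.log ((⌊t⌋₊ - 1 : ℕ) + 2)) atTop (𝓝 (-1)) :=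
    aux_A.comp ((tendsto_sub_atTop_nat 1).comp tendsto_nat_floor_atTop)
  refine tendsto_of_tendsto_of_tendsto_of_le_of_le' hlo hup ?_ ?_
  · filter_upwards [eventually_ge_atTop (3:ℝ)] with t ht
    set n := ⌊t⌋₊ with hn
    have hn3 : 3 ≤ n := Nat.le_floor (by exact_mod_cast ht)
    have hn3R : (3:ℝ) ≤ (n:ℝ) := by exact_mod_cast hn3
    have hnt : (n:ℝ) ≤ t := Nat.floor_le (by linarith)
    have htn : t < n + 1 := Nat.lt_floor_add_one t
    have hm : ((n - 1 : ℕ) : ℝ) = (n:ℝ) - 1 := by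
      have h1 : 1 ≤ n := by omega
      push_cast [h1]; ring
    have hGmono : Real.Gamma (n:ℝ) ≤ Real.Gamma t := by
      rcases eq_or_lt_of_le hnt with h | h
      · rw [h]
      · exact le_of_lt (Real.Gamma_strictMonoOn_Ici (Set.mem_Ici.mpr (by linarith))
          (Set.mem_Ici.mpr (by linarith)) h)
    have hGn : Real.Gamma (n:ℝ) = (n-1)! := by
      have h2 : ((n - 1 : ℕ) : ℝ) + 1 = (n : ℝ) := by rw [hm]; ring
      rw [← h2, Real.Gamma_nat_eq_factorial]
    have hfact0 : (0:ℝ) ≤ Real.log (n-1)! :=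
      Real.log_nonneg (Nat.one_le_cast.mpr (Nat.factorial_pos _))
    have ht0 : (0:ℝ) < t := by linarith
    have hm2 : t ≤ ((n - 1 : ℕ) : ℝ) + 2 := by rw [hm]; linarith
    have hloggamma : Real.log (n-1)! ≤ Real.log (Real.Gamma t) := by
      rw [← hGn]
      exact Real.log_le_log (Real.Gamma_pos_of_pos (by linarith)) hGmono
    have d1 : Real.log (n-1)! / (((n - 1 : ℕ) : ℝ) + 2) ≤ Real.log (n-1)! / t :=
      div_le_div_of_nonneg_left hfact0 ht0 hm2
    have d2 : Real.log t ≤ Real.log (((n - 1 : ℕ) : ℝ) + 2) := Real.log_le_log ht0 hm2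
    have d3 : Real.log (n-1)! / t ≤ Real.log (Real.Gamma t) / t :=
      by gcongr
    linarith
  · filter_upwards [eventually_ge_atTop (3:ℝ)] with t ht
    set n := ⌊t⌋₊ with hn
    have hn3 : 3 ≤ n := Nat.le_floor (by exact_mod_cast ht)
    have hn3R : (3:ℝ) ≤ (n:ℝ) := by exact_mod_cast hn3
    have hn0 : (0:ℝ) < n := by linarith
    have hnt : (n:ℝ) ≤ t := Nat.floor_le (by linarith)
    have ht0 : (0:ℝ) < t := by linarith
    have htn : t < n + 1 := Nat.lt_floor_add_one t
    have hGmono : Real.Gamma t ≤ Real.Gamma ((n:ℝ)+1) := by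
      rcases eq_or_lt_of_le htn.le with h | h
      · rw [h]
      · exact le_of_lt (Real.Gamma_strictMonoOn_Ici (Set.mem_Ici.mpr (by linarith))
          (Set.mem_Ici.mpr (by linarith)) h)
    have hGn : Real.Gamma ((n:ℝ)+1) = n ! := Real.Gamma_nat_eq_factorial n
    have hfact0 : (0:ℝ) ≤ Real.log n ! :=
      Real.log_nonneg (Nat.one_le_cast.mpr (Nat.factorial_pos _))
    have hloggamma : Real.log (Real.Gamma t) ≤ Real.log n ! := by
      rw [← hGn]
      exact Real.log_le_log (Real.Gamma_pos_of_pos (by linarith)) hGmono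
    have d1 : Real.log n ! / t ≤ Real.log n ! / (n:ℝ) :=
      div_le_div_of_nonneg_left hfact0 hn0 hnt
    have d2 : Real.log (n:ℝ) ≤ Real.log t := Real.log_le_log hn0 hnt
    have d3 : Real.log (Real.Gamma t) / t ≤ Real.log n ! / t :=
      by gcongr
    linarith

lemma aux_h (x : ℝ) (hx0 : 0 < x) :
    Tendsto (fun n : ℕ => (2:ℝ)^(-(n:ℝ)) * Real.log (Real.Gamma (((2:ℝ)^n * x + 1)/2))
      - (n:ℝ) * (x/2) * Real.log 2) atTop
      (𝓝 ((x/2) * Real.log (x/2) - x/2)) := by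
  set c : ℝ := x / 2 with hc
  have hc0 : 0 < c := by positivity
  set z : ℕ → ℝ := fun n => ((2:ℝ)^n * x + 1)/2 with hz
  set w : ℕ → ℝ := fun n => ((2:ℝ)^n)⁻¹ / 2 with hw
  set u : ℕ → ℝ := fun n => Real.log (Real.Gamma (z n)) / z n - Real.log (z n) with hu
  have hzpos : ∀ n, 0 < z n := fun n => by positivity
  have hwpos : ∀ n, 0 < w n := fun n => by positivity
  -- limits of the pieces
  have hw0 : Tendsto w atTop (𝓝 0) := by
    have : Tendsto (fun n : ℕ => ((1:ℝ)/2) ^ n) atTop (𝓝 0) :=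
      tendsto_pow_atTop_nhds_zero_of_lt_one (by norm_num) (by norm_num)
    have := this.div_const 2
    rw [zero_div] at this
    refine this.congr fun n => ?_
    simp only [hw, one_div, inv_pow]
  have hcw : Tendsto (fun n => c + w n) atTop (𝓝 c) := by
    simpa using tendsto_const_nhds.add hw0
  have hztop : Tendsto z atTop atTop := by
    have h1 : Tendsto (fun n : ℕ => (2:ℝ)^n) atTop atTop :=
      tendsto_pow_atTop_atTop_of_one_lt one_lt_two
    have h2 := (h1.atTop_mul_const hx0).atTop_add tendsto_const_nhds (C := (1:ℝ))
    exact h2.atTop_div_const (by norm_num)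
  have hu1 : Tendsto u atTop (𝓝 (-1)) := aux_gamma.comp hztop
  have hlogcw : Tendsto (fun n => Real.log (c + w n)) atTop (𝓝 (Real.log c)) :=
    (Real.continuousAt_log (ne_of_gt hc0)).tendsto.comp hcw
  have hwn : Tendsto (fun n : ℕ => w n * ((n:ℝ) * Real.log 2)) atTop (𝓝 0) := by
    have h1 : Tendsto (fun n : ℕ => (n:ℝ) * ((1:ℝ)/2) ^ n) atTop (𝓝 0) :=
      tendsto_self_mul_const_pow_of_lt_one (by norm_num) (by norm_num)
    have h2 := (h1.const_mul (Real.log 2 / 2))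
    rw [mul_zero] at h2
    refine h2.congr fun n => ?_
    simp only [hw, div_pow, one_pow, inv_eq_one_div]
    ring
  have hcomb := ((hcw.mul hu1).add (hcw.mul hlogcw)).add hwn
  rw [show c * (-1) + c * Real.log c + 0 = c * Real.log c - c by ring] at hcomb
  refine hcomb.congr fun n => ?_
  -- pointwise identity
  have hP : (0:ℝ) < (2:ℝ)^n := by positivity
  have hrw : (2:ℝ)^(-(n:ℝ)) = ((2:ℝ)^n)⁻¹ := by
    rw [Real.rpow_neg (by norm_num), Real.rpow_natCast]
  have hcw0 : 0 < c + w n := by positivity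
  have hzcw : z n = (2:ℝ)^n * (c + w n) := by
    simp only [hz, hw, hc]
    field_simp
  have hlogz : Real.log (z n) = (n:ℝ) * Real.log 2 + Real.log (c + w n) := by
    rw [hzcw, Real.log_mul (ne_of_gt hP) (ne_of_gt hcw0), Real.log_pow]
  have hlogGamma : Real.log (Real.Gamma (z n)) = z n * u n + z n * Real.log (z n) := by
    simp only [hu]
    have hz0 : z n ≠ 0 := (hzpos n).ne'
    rw [← mul_add, sub_add_cancel]
    field_simp
  rw [hrw, hlogGamma, hlogz, hzcw]
  clear_value c z w u
  have h2n : ((2:ℝ)^n)⁻¹ = 2 * w n := by simp [hw]; ring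
  rw [h2n]
  have hwP : w n * ((2:ℝ)^n) * 2 = 1 := by
    simp only [hw]
    field_simp
  linear_combination (-1 * ((c + w n) * u n + (c + w n) * ((n:ℝ) * Real.log 2 + Real.log (c + w n)))) * hwP

theorem nielsen_infinite_product (x : ℝ) (hx0 : 0 < x) (hx1 : x < 1) :
    Filter.Tendsto (fun n : ℕ => ∏ p ∈ Finset.Icc 1 n,
      ((2:ℝ) ^ (-(2:ℝ)^((p:ℝ)-1) * x) * Real.Gamma (((2:ℝ)^p * x + 1)/2)
        / (Real.Gamma (((2:ℝ)^p * x + 2)/4))^2) ^ ((2:ℝ)^(-(p:ℝ))))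
      Filter.atTop
      (nhds ((2 * Real.exp 1) ^ (-x/2) * x ^ (x/2) / Real.Gamma ((x+1)/2))) := by
  have hG0pos : 0 < Real.Gamma ((x+1)/2) := Real.Gamma_pos_of_pos (by linarith)
  set G0 := Real.Gamma ((x+1)/2) with hG0
  set h : ℕ → ℝ := fun n => (2:ℝ)^(-(n:ℝ)) * Real.log (Real.Gamma (((2:ℝ)^n * x + 1)/2))
      - (n:ℝ) * (x/2) * Real.log 2 with hh
  have hfact : ∀ n : ℕ,
      ((2:ℝ) ^ (-(2:ℝ)^(((n+1:ℕ):ℝ)-1) * x) * Real.Gamma (((2:ℝ)^(n+1) * x + 1)/2)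
        / (Real.Gamma (((2:ℝ)^(n+1) * x + 2)/4))^2) ^ ((2:ℝ)^(-((n+1:ℕ):ℝ)))
      = Real.exp (h (n+1) - h n) := by
    intro n
    have hA : 0 < Real.Gamma (((2:ℝ)^n * x + 1)/2) := Real.Gamma_pos_of_pos (by positivity)
    have hB : 0 < Real.Gamma (((2:ℝ)^(n+1) * x + 1)/2) := Real.Gamma_pos_of_pos (by positivity)
    have harg : ((2:ℝ)^(n+1) * x + 2)/4 = ((2:ℝ)^n * x + 1)/2 := by ring
    rw [harg]
    have he : (2:ℝ)^(((n+1:ℕ):ℝ)-1) = (2:ℝ)^n := by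
      push_cast
      rw [add_sub_cancel_right, Real.rpow_natCast]
    rw [he]
    have h2e : (0:ℝ) < (2:ℝ) ^ (-((2:ℝ)^n) * x) := Real.rpow_pos_of_pos two_pos _
    have hbase : (0:ℝ) < (2:ℝ) ^ (-((2:ℝ)^n) * x) * Real.Gamma (((2:ℝ)^(n+1) * x + 1)/2)
        / (Real.Gamma (((2:ℝ)^n * x + 1)/2))^2 := by positivity
    rw [Real.rpow_def_of_pos hbase]
    congr 1
    rw [Real.log_div (by positivity) (by positivity), Real.log_mul (ne_of_gt h2e) (ne_of_gt hB),
      Real.log_rpow two_pos, Real.log_pow]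
    have r1 : (2:ℝ)^(-((n+1:ℕ):ℝ)) = ((2:ℝ)^(n+1))⁻¹ := by
      rw [Real.rpow_neg (by norm_num), Real.rpow_natCast]
    have r2 : (2:ℝ)^(-(n:ℝ)) = ((2:ℝ)^n)⁻¹ := by
      rw [Real.rpow_neg (by norm_num), Real.rpow_natCast]
    simp only [hh, r1, r2]
    have hp : ((2:ℝ))^(n+1) = 2 * (2:ℝ)^n := by ring
    rw [hp]
    have hPn : (0:ℝ) < (2:ℝ)^n := by positivity
    push_cast
    field_simp
    ring
  have key : ∀ n : ℕ, (∏ p ∈ Finset.Icc 1 n,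
      ((2:ℝ) ^ (-(2:ℝ)^((p:ℝ)-1) * x) * Real.Gamma (((2:ℝ)^p * x + 1)/2)
        / (Real.Gamma (((2:ℝ)^p * x + 2)/4))^2) ^ ((2:ℝ)^(-(p:ℝ))))
      = Real.exp (h n - h 0) := by
    intro n
    induction n with
    | zero => rw [show Finset.Icc 1 0 = ∅ from rfl, Finset.prod_empty, sub_self, Real.exp_zero]
    | succ n ih =>
      rw [Finset.prod_Icc_succ_top (Nat.le_add_left 1 n), ih, hfact n, ← Real.exp_add]
      congr 1
      ring
  have hlim := aux_h x hx0
  have hsub := hlim.sub_const (h 0)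
  have hexp := (Real.continuous_exp.tendsto _).comp hsub
  have h0val : h 0 = Real.log G0 := by
    simp only [hh, hG0]
    norm_num
  have hval : Real.exp ((x/2) * Real.log (x/2) - x/2 - h 0)
      = (2 * Real.exp 1) ^ (-x/2) * x ^ (x/2) / G0 := by
    rw [h0val, Real.exp_sub, Real.exp_log hG0pos]
    congr 1
    rw [Real.rpow_def_of_pos (by positivity), Real.rpow_def_of_pos hx0, ← Real.exp_add]
    congr 1
    rw [Real.log_mul two_ne_zero (Real.exp_ne_zero 1), Real.log_exp,
      Real.log_div (ne_of_gt hx0) two_ne_zero]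
    ring
  rw [← hval]
  exact hexp.congr (fun n => (key n).symm)
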